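/- arXiv:1803.10415 — 6 statements merged into one kernel-verified Lean document; each statement's English description precedes it below -/
import Mathlib

section
/- For the single-arm allocation algorithm with parameter c > 1 (allocate M_t = L_{t-1} + c/t, set L_t = M_t on failure, L_t = L_{t-1} on success, L_0 = 0), define the error e_t = ν - L_t where 0 ≤ ν ≤ 1 is the arm's threshold. If the conditional probability of failure at time t is at least ν - M_t, then for all 0 ≤ t ≤ n, E[e_t] ≤ (c²/(c-1)) · 1/(t+1). -/
open MeasureTheory

/-- Single-arm allocation algorithm with parameter `c > 1`: allocate `M t = L (t-1) + c/t`,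
set `L t = M t` on failure (`X t = 0`), `L t = L (t-1)` on success, `L 0 = 0`. If the
conditional probability of failure at time `t` (given the history) is at least `ν - M t`,
then for all `0 ≤ t ≤ n`, `E[ν - L t] ≤ (c²/(c-1))·1/(t+1)`. -/
theorem single_arm_error_bound {Ω : Type*} [MeasurableSpace Ω]
    (μ : Measure Ω) [IsProbabilityMeasure μ]
    (c ν : ℝ) (hc : 1 < c) (hν0 : 0 ≤ ν) (hν1 : ν ≤ 1)
    (X L M : ℕ → Ω → ℝ)
    (hX01 : ∀ t ω, X t ω = 0 ∨ X t ω = 1)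
    (hL0 : ∀ ω, L 0 ω = 0)
    (hM : ∀ t : ℕ, 1 ≤ t → ∀ ω, M t ω = L (t - 1) ω + c / t)
    (hLupd : ∀ t : ℕ, 1 ≤ t → ∀ ω,
      L t ω = if X t ω = 0 then M t ω else L (t - 1) ω)
    (ℱ : ℕ → MeasurableSpace Ω) (hℱ : ∀ t, ℱ t ≤ ‹MeasurableSpace Ω›)
    (hℱmono : Monotone ℱ)
    (hXmeas : ∀ t, Measurable[ℱ t] (X t))
    (hfail : ∀ t : ℕ, 1 ≤ t →
      ∀ᵐ ω ∂μ, ν - M t ω ≤ (μ[fun ω' => 1 - X t ω' | ℱ (t - 1)]) ω)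
    (n : ℕ) :
    ∀ t ≤ n, ∫ ω, (ν - L t ω) ∂μ ≤ c ^ 2 / (c - 1) * (1 / (t + 1)) := by
  have hc1 : (0:ℝ) < c - 1 := by linarith
  have hc0 : (0:ℝ) < c := by linarith
  set C := c ^ 2 / (c - 1) with hCdef
  have hCpos : 0 < C := by positivity
  have hCc : C * (c - 1) = c ^ 2 := by
    rw [hCdef]; field_simp
  -- key pointwise identity
  have key : ∀ t : ℕ, ∀ ω, L (t+1) ω = L t ω + c / ((t:ℝ)+1) * (1 - X (t+1) ω) := by
    intro t ω
    have h1 : (1:ℕ) ≤ t + 1 := by omega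
    have h := hLupd (t+1) h1 ω
    rw [hM (t+1) h1 ω] at h
    simp only [Nat.add_sub_cancel] at h
    rcases hX01 (t+1) ω with hx | hx <;> rw [h] <;> simp [hx] <;> push_cast <;> ring
  have measX : ∀ t, Measurable (X t) := fun t => (hXmeas t).mono (hℱ t) le_rfl
  have intX : ∀ t, Integrable (X t) μ := by
    intro t
    refine (integrable_const (1:ℝ)).mono' (measX t).aestronglyMeasurable ?_
    filter_upwards with ω
    rcases hX01 t ω with h | h <;> simp [h]
  have main : ∀ t : ℕ, Integrable (L t) μ ∧ (∀ ω, 0 ≤ L t ω) ∧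
      ∫ ω, (ν - L t ω) ∂μ ≤ C * (1 / ((t:ℝ) + 1)) := by
    intro t
    induction t with
    | zero =>
      have hL0' : L 0 = fun _ => (0:ℝ) := funext hL0
      refine ⟨by rw [hL0']; exact integrable_const 0, fun ω => by rw [hL0 ω], ?_⟩
      rw [hL0']
      simp only [sub_zero, integral_const, probReal_univ, smul_eq_mul,
        one_mul, Nat.cast_zero, zero_add, div_one, mul_one]
      have : 1 ≤ C := by
        rw [le_div_iff₀ hc1]; nlinarith
      linarith
    | succ t ih =>
      obtain ⟨intL, nnL, ha⟩ := ih
      set T : ℝ := (t:ℝ) + 1 with hTdef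
      have hT : (0:ℝ) < T := by positivity
      set k : ℝ := c / T with hkdef
      have hkpos : 0 < k := by positivity
      have hkT : k * T = c := by rw [hkdef]; field_simp
      have e1 : (fun ω => L (t+1) ω) = fun ω => L t ω + k * (1 - X (t+1) ω) :=
        funext (key t)
      have int1X : Integrable (fun ω => 1 - X (t+1) ω) μ :=
        (integrable_const 1).sub (intX (t+1))
      have intL' : Integrable (L (t+1)) μ := by
        rw [show L (t+1) = fun ω => L t ω + k * (1 - X (t+1) ω) from e1]
        exact intL.add (int1X.const_mul k)
      have nnL' : ∀ ω, 0 ≤ L (t+1) ω := by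
        intro ω
        rw [key t ω]
        have : 0 ≤ 1 - X (t+1) ω := by rcases hX01 (t+1) ω with h | h <;> simp [h]
        have := mul_nonneg hkpos.le this
        have := nnL ω
        rw [hkdef] at *
        linarith
      have intνL : Integrable (fun ω => ν - L t ω) μ := (integrable_const ν).sub intL
      -- integral recursion
      have hI : ∫ ω, (ν - L (t+1) ω) ∂μ
          = (∫ ω, (ν - L t ω) ∂μ) - k * ∫ ω, (1 - X (t+1) ω) ∂μ := by
        have e2 : (fun ω => ν - L (t+1) ω)
            = fun ω => (ν - L t ω) - k * (1 - X (t+1) ω) := by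
          funext ω; rw [key t ω]; rw [hkdef]; ring
        rw [e2, integral_sub intνL (int1X.const_mul k), integral_const_mul]
      -- lower bound on ∫ (1 - X)
      have hMrw : (fun ω => ν - M (t+1) ω) = fun ω => (ν - L t ω) - k := by
        funext ω
        rw [hM (t+1) (by omega) ω]
        simp only [Nat.add_sub_cancel]
        rw [hkdef, hTdef]
        push_cast
        ring
      have hcond : ∫ ω, (ν - M (t+1) ω) ∂μ ≤ ∫ ω, (1 - X (t+1) ω) ∂μ := by
        have h1 : ∫ ω, (ν - M (t+1) ω) ∂μ
            ≤ ∫ ω, (μ[fun ω' => 1 - X (t+1) ω' | ℱ t]) ω ∂μ := by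
          refine integral_mono_ae ?_ integrable_condExp ?_
          · rw [hMrw]; exact intνL.sub (integrable_const k)
          · have h2 := hfail (t+1) (by omega)
            simpa only [Nat.add_sub_cancel, Filter.EventuallyLE] using h2
        rwa [integral_condExp (hℱ t)] at h1
      have hlow : (∫ ω, (ν - L t ω) ∂μ) - k ≤ ∫ ω, (1 - X (t+1) ω) ∂μ := by
        rw [hMrw, integral_sub intνL (integrable_const k), integral_const, probReal_univ,
          smul_eq_mul, one_mul] at hcond
        exact hcond
      refine ⟨intL', nnL', ?_⟩
      set a : ℝ := ∫ ω, (ν - L t ω) ∂μ with hadef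
      set I : ℝ := ∫ ω, (1 - X (t+1) ω) ∂μ with hIdef
      have hgoalcast : ((t:ℝ) + 1) + 1 = T + 1 := by rw [hTdef]
      have hT1 : (0:ℝ) < T + 1 := by linarith
      rw [hI]
      push_cast
      rw [hgoalcast]
      by_cases hcle : c ≤ T
      · -- recursion case
        have hk1 : k ≤ 1 := by rw [hkdef]; exact div_le_one_of_le₀ hcle hT.le
        have h2 : a - k * I ≤ a * (1 - k) + k * k := by
          nlinarith [mul_le_mul_of_nonneg_left hlow hkpos.le]
        have h3 : a * (1 - k) ≤ (C / T) * (1 - k) := by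
          have haT : a ≤ C / T := by
            rw [div_eq_mul_inv, ← one_div]; exact ha
          exact mul_le_mul_of_nonneg_right haT (by linarith)
        have h4 : (C / T) * (1 - k) + k * k ≤ C * (1 / (T + 1)) := by
          rw [hkdef]
          rw [show C / T * (1 - c / T) + c / T * (c / T) = (C * T - C * c + c ^ 2) / T ^ 2 by
            field_simp]
          rw [one_div, ← div_eq_mul_inv, div_le_div_iff₀ (by positivity) hT1]
          nlinarith
        linarith
      · -- trivial case: t + 1 < c
        have hb : a - k * I ≤ ν := by
          have : a - k * I = ν - ∫ ω, L (t+1) ω ∂μ := by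
            rw [hadef, hIdef, ← hI, integral_sub (integrable_const ν) intL',
              integral_const, probReal_univ, smul_eq_mul, one_mul]
          rw [this]
          have : 0 ≤ ∫ ω, L (t+1) ω ∂μ := integral_nonneg nnL'
          linarith
        have hone : 1 ≤ C * (1 / (T + 1)) := by
          rw [one_div, ← div_eq_mul_inv, le_div_iff₀ hT1]
          push_neg at hcle
          nlinarith
        linarith
  intro t _
  have h := (main t).2.2
  exact h
end

section
/- Let a_1 = c·ν and a_t = c·ν·exp(-Σ_{i=1}^{t-1} a_i/(c·ν)) for t > 1, where c, ν > 0. Then Σ_{t=1}^n a_t ≤ c·ν·(log n + 1) for all n ≥ 1. -/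
lemma sum_decaying_key (K x B : ℝ) (hK : 0 < K) (hx : 0 ≤ x) (hxB : x ≤ B) :
    x + K * Real.exp (-x / K) ≤ B + K * Real.exp (-B / K) := by
  have h2 : 1 - Real.exp (-((B - x) / K)) ≤ (B - x) / K := by
    nlinarith [Real.add_one_le_exp (-((B - x) / K))]
  have h3 : Real.exp (-x / K) ≤ 1 := by
    apply Real.exp_le_one_iff.mpr
    have : 0 ≤ x / K := div_nonneg hx hK.le
    linarith [neg_div K x]
  have h4 : Real.exp (-(B - x) / K) ≤ 1 := by
    apply Real.exp_le_one_iff.mpr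
    have : 0 ≤ (B - x) / K := div_nonneg (by linarith) hK.le
    linarith [neg_div K (B - x)]
  have hsplit : Real.exp (-B / K) = Real.exp (-x / K) * Real.exp (-((B - x) / K)) := by
    rw [← Real.exp_add]; ring_nf
  have h5 : Real.exp (-x / K) - Real.exp (-B / K)
      = Real.exp (-x / K) * (1 - Real.exp (-((B - x) / K))) := by
    rw [hsplit]; ring
  have h6 : Real.exp (-x / K) * (1 - Real.exp (-((B - x) / K))) ≤ 1 * ((B - x) / K) := by
    apply mul_le_mul h3 h2 _ one_pos.le
    have := h4
    rw [neg_div] at this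
    linarith
  have h7 : Real.exp (-x / K) - Real.exp (-B / K) ≤ (B - x) / K := by
    rw [h5]; linarith
  have h8 : K * (Real.exp (-x / K) - Real.exp (-B / K)) ≤ K * ((B - x) / K) :=
    mul_le_mul_of_nonneg_left h7 hK.le
  rw [mul_div_cancel₀ _ hK.ne'] at h8
  nlinarith

/-- Let `a 1 = c·ν` and `a t = c·ν·exp(-(∑_{i=1}^{t-1} a i)/(c·ν))` for `t > 1`, where
`c, ν > 0`. Then `∑_{t=1}^n a t ≤ c·ν·(log n + 1)` for all `n ≥ 1`. -/
theorem sum_decaying_seq_le (c ν : ℝ) (hc : 0 < c) (hν : 0 < ν) (a : ℕ → ℝ)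
    (h1 : a 1 = c * ν)
    (hrec : ∀ t : ℕ, 1 < t →
      a t = c * ν * Real.exp (-(∑ i ∈ Finset.Icc 1 (t - 1), a i) / (c * ν))) :
    ∀ n : ℕ, 1 ≤ n → ∑ t ∈ Finset.Icc 1 n, a t ≤ c * ν * (Real.log n + 1) := by
  set K := c * ν with hKdef
  have hK : 0 < K := mul_pos hc hν
  -- strengthened induction: K ≤ S n and S n ≤ K * (log n + 1)
  have main : ∀ n : ℕ, 1 ≤ n →
      K ≤ ∑ t ∈ Finset.Icc 1 n, a t ∧
      ∑ t ∈ Finset.Icc 1 n, a t ≤ K * (Real.log n + 1) := by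
    intro n hn
    induction n, hn using Nat.le_induction with
    | base =>
      simp [h1, Real.log_one]
    | succ n hn ih =>
      obtain ⟨ihlb, ihub⟩ := ih
      set S := ∑ t ∈ Finset.Icc 1 n, a t with hS
      have hsum : ∑ t ∈ Finset.Icc 1 (n + 1), a t = S + a (n + 1) := by
        rw [Finset.sum_Icc_succ_top (by omega : 1 ≤ n + 1)]
      have ha : a (n + 1) = K * Real.exp (-S / K) := by
        rw [hrec (n + 1) (by omega)]
        simp [hS]
      have hSnonneg : 0 ≤ S := le_trans hK.le ihlb
      constructor
      · rw [hsum, ha]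
        have : 0 < K * Real.exp (-S / K) := by positivity
        linarith
      · rw [hsum, ha]
        set B := K * (Real.log n + 1) with hB
        have step1 : S + K * Real.exp (-S / K) ≤ B + K * Real.exp (-B / K) :=
          sum_decaying_key K S B hK hSnonneg ihub
        have hn1 : (1 : ℝ) ≤ (n : ℝ) := by exact_mod_cast hn
        have hnpos : (0 : ℝ) < (n : ℝ) := by linarith
        have hexpB : Real.exp (-B / K) = 1 / (Real.exp 1 * n) := by
          rw [hB]
          have : -(K * (Real.log n + 1)) / K = -(Real.log n + 1) := by
            field_simp
          rw [this]
          rw [neg_add, Real.exp_add, Real.exp_neg, Real.exp_neg, Real.exp_log hnpos]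
          field_simp
        -- need: B + K/(e n) ≤ K (log (n+1) + 1)
        -- i.e. 1/(e n) ≤ log(n+1) - log n
        have hlog : 1 / ((n : ℝ) + 1) ≤ Real.log ((n : ℝ) + 1) - Real.log n := by
          have h := Real.log_le_sub_one_of_pos
            (show (0:ℝ) < (n : ℝ) / ((n : ℝ) + 1) by positivity)
          rw [Real.log_div hnpos.ne' (by linarith)] at h
          have : (n : ℝ) / ((n : ℝ) + 1) - 1 = -(1 / ((n : ℝ) + 1)) := by
            field_simp
            ring
          linarith [this ▸ h]
        have he : (2 : ℝ) ≤ Real.exp 1 := by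
          have := Real.add_one_le_exp (1 : ℝ)
          linarith
        have hfrac : 1 / (Real.exp 1 * n) ≤ 1 / ((n : ℝ) + 1) := by
          apply one_div_le_one_div_of_le (by linarith)
          nlinarith
        have hcast : Real.log ((n : ℝ) + 1) = Real.log ((n + 1 : ℕ) : ℝ) := by
          push_cast; ring_nf
        rw [hexpB] at step1
        rw [hB] at step1
        have final : K * (Real.log n + 1) + K * (1 / (Real.exp 1 * n))
            ≤ K * (Real.log ((n : ℝ) + 1) + 1) := by
          have : 1 / (Real.exp 1 * n) ≤ Real.log ((n : ℝ) + 1) - Real.log n :=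
            le_trans hfrac hlog
          nlinarith
        rw [hcast] at final
        linarith
  intro n hn
  exact (main n hn).2
end

section
/- Let 0 < p < q < 1 with q ≤ 2p (i.e., q = (1+ε)p with 0 < ε ≤ 1). Then the KL divergence D(p‖q) = p·log(p/q) + (1-p)·log((1-p)/(1-q)) satisfies D(p‖q) ≤ (1 + 1/(4(1-q)²))·(ε²p/2), and consequently (q-p)/D(p‖q) ≥ (4(1-q)²/(4(1-q)²+1))·(1/p)/((1/p) - (1/q)). -/
lemma aux1 {x : ℝ} (hx : 0 ≤ x) : x - x^2/2 ≤ Real.log (1+x) := by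
  have key : MonotoneOn (fun t : ℝ => Real.log (1+t) - t + t^2/2) (Set.Ici 0) := by
    apply monotoneOn_of_hasDerivWithinAt_nonneg (f' := fun t : ℝ => (1+t)⁻¹ - 1 + t)
      (convex_Ici 0)
    · apply ContinuousOn.add
      · apply ContinuousOn.sub
        · apply ContinuousOn.log (by fun_prop)
          intro t ht
          simp only [Set.mem_Ici] at ht
          positivity
        · fun_prop
      · fun_prop
    · intro t ht
      simp only [interior_Ici, Set.mem_Ioi] at ht
      have h1 : (1:ℝ) + t ≠ 0 := by positivity
      have hl : HasDerivAt (fun s : ℝ => Real.log (1+s)) ((1+t)⁻¹) t := by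
        have := (Real.hasDerivAt_log h1).comp t (((hasDerivAt_id t).const_add 1))
        exact this.congr_deriv (by simp)
      have hsq : HasDerivAt (fun s : ℝ => s^2/2) t t := by
        simpa using (hasDerivAt_pow 2 t).div_const 2
      exact ((hl.sub (hasDerivAt_id t)).add hsq).hasDerivWithinAt
    · intro t ht
      simp only [interior_Ici, Set.mem_Ioi] at ht
      have h1 : (0:ℝ) < 1 + t := by linarith
      rw [inv_eq_one_div]
      have : 1/(1+t) - 1 + t = t^2/(1+t) := by field_simp; ring
      rw [this]; positivity
  have h0 : (0:ℝ) ∈ Set.Ici (0:ℝ) := Set.self_mem_Ici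
  have := key h0 (Set.mem_Ici.2 hx) hx
  simp only [add_zero, Real.log_one] at this
  nlinarith [this]

lemma aux2 {y : ℝ} (hy0 : 0 < y) (hy1 : y ≤ 1) :
    (y-1) - (y-1)^2/(2*y) ≤ Real.log y := by
  have key : MonotoneOn (fun t : ℝ => (t-1) - (t-1)^2/(2*t) - Real.log t) (Set.Ioc 0 1) := by
    apply monotoneOn_of_hasDerivWithinAt_nonneg
      (f' := fun t : ℝ => 1 - (2*(t-1)*(2*t) - (t-1)^2*2)/(2*t)^2 - t⁻¹)
      (convex_Ioc 0 1)
    · apply ContinuousOn.sub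
      · apply ContinuousOn.sub (by fun_prop)
        apply ContinuousOn.div (by fun_prop) (by fun_prop)
        intro t ht
        simp only [Set.mem_Ioc] at ht
        have : (0:ℝ) < 2*t := by linarith
        exact this.ne'
      · apply ContinuousOn.log (by fun_prop)
        intro t ht
        simp only [Set.mem_Ioc] at ht
        exact ht.1.ne'
    · intro t ht
      rw [interior_Ioc] at ht
      obtain ⟨ht0, ht1⟩ := ht
      have h2t : (2:ℝ)*t ≠ 0 := by positivity
      have hdiv : HasDerivAt (fun s : ℝ => (s-1)^2/(2*s))
          ((2*(t-1)*(2*t) - (t-1)^2*2)/(2*t)^2) t := by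
        have hu : HasDerivAt (fun s : ℝ => (s-1)^2) (2*(t-1)) t := by
          have := (((hasDerivAt_id t).sub_const 1).pow 2)
          exact this.congr_deriv (by simp)
        have hv : HasDerivAt (fun s : ℝ => 2*s) 2 t := by
          simpa using (hasDerivAt_id t).const_mul 2
        exact hu.div hv h2t
      have hl : HasDerivAt Real.log t⁻¹ t := Real.hasDerivAt_log (ne_of_gt ht0)
      exact ((((hasDerivAt_id t).sub_const 1).sub hdiv).sub hl).hasDerivWithinAt
    · intro t ht
      rw [interior_Ioc] at ht
      obtain ⟨ht0, ht1⟩ := ht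
      have : 1 - (2*(t-1)*(2*t) - (t-1)^2*2)/(2*t)^2 - t⁻¹ = (t-1)^2/(2*t^2) := by
        field_simp
        ring
      rw [this]; positivity
  have h1 : (1:ℝ) ∈ Set.Ioc (0:ℝ) 1 := by simp
  have := key (Set.mem_Ioc.2 ⟨hy0, hy1⟩) h1 hy1
  simp only [sub_self, Real.log_one] at this
  nlinarith [this]

set_option maxHeartbeats 1000000 in
/-- For `0 < p < q < 1` with `q ≤ 2p` (so `ε = q/p - 1 ∈ (0,1]`), the binary KL divergence
`D(p‖q) = p·log(p/q) + (1-p)·log((1-p)/(1-q))` satisfies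
`D(p‖q) ≤ (1 + 1/(4(1-q)²))·(ε²p/2)`, and consequently
`(q-p)/D(p‖q) ≥ (4(1-q)²/(4(1-q)²+1))·(1/p)/((1/p) - (1/q))`. -/
theorem kl_bound_small_eps (p q : ℝ) (hp : 0 < p) (hpq : p < q) (hq : q < 1)
    (h2 : q ≤ 2 * p) :
    p * Real.log (p / q) + (1 - p) * Real.log ((1 - p) / (1 - q))
      ≤ (1 + 1 / (4 * (1 - q) ^ 2)) * ((q / p - 1) ^ 2 * p / 2) ∧
    (4 * (1 - q) ^ 2 / (4 * (1 - q) ^ 2 + 1)) * ((1 / p) / (1 / p - 1 / q))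
      ≤ (q - p) /
        (p * Real.log (p / q) + (1 - p) * Real.log ((1 - p) / (1 - q))) := by
  have hq0 : 0 < q := hp.trans hpq
  have h1p : 0 < 1 - p := by linarith
  have h1q : 0 < 1 - q := by linarith
  have hqp : 0 < q - p := by linarith
  -- rewrite the logs
  have hlog1 : Real.log (p/q) = - Real.log (q/p) := by
    rw [← Real.log_inv, inv_div]
  have hlog2 : Real.log ((1-p)/(1-q)) = - Real.log ((1-q)/(1-p)) := by
    rw [← Real.log_inv, inv_div]
  -- first log bound
  have hx : 0 ≤ q/p - 1 := by
    rw [sub_nonneg, le_div_iff₀ hp]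
    linarith
  have hA0 := aux1 hx
  have hxe : (1:ℝ) + (q/p - 1) = q/p := by ring
  rw [hxe] at hA0
  have hA : p * Real.log (p/q) ≤ -(q-p) + (q-p)^2/(2*p) := by
    rw [hlog1]
    have h1 : p * -Real.log (q/p) ≤ p * -((q/p-1) - (q/p-1)^2/2) := by
      apply mul_le_mul_of_nonneg_left _ hp.le
      linarith
    have h2' : p * -((q/p-1) - (q/p-1)^2/2) = -(q-p) + (q-p)^2/(2*p) := by
      field_simp
      ring
    linarith
  -- second log bound
  have hy0 : 0 < (1-q)/(1-p) := by positivity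
  have hy1 : (1-q)/(1-p) ≤ 1 := by
    rw [div_le_one h1p]; linarith
  have hB0 := aux2 hy0 hy1
  have hB : (1-p) * Real.log ((1-p)/(1-q)) ≤ (q-p) + (q-p)^2/(2*(1-q)) := by
    rw [hlog2]
    have h1 : (1-p) * -Real.log ((1-q)/(1-p))
        ≤ (1-p) * -(((1-q)/(1-p)-1) - ((1-q)/(1-p)-1)^2/(2*((1-q)/(1-p)))) := by
      apply mul_le_mul_of_nonneg_left _ h1p.le
      linarith
    have h2' : (1-p) * -(((1-q)/(1-p)-1) - ((1-q)/(1-p)-1)^2/(2*((1-q)/(1-p))))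
        = (q-p) + (q-p)^2/(2*(1-q)) := by
      field_simp
      ring
    linarith
  -- combined KL upper bound
  have hDle : p * Real.log (p / q) + (1 - p) * Real.log ((1 - p) / (1 - q))
      ≤ (q-p)^2/(2*p) + (q-p)^2/(2*(1-q)) := by linarith
  -- RHS of part 1 rewritten
  have hRHS : (1 + 1 / (4 * (1 - q) ^ 2)) * ((q / p - 1) ^ 2 * p / 2)
      = (q-p)^2/(2*p) + (q-p)^2/(8*p*(1-q)^2) := by
    field_simp
    ring
  have h4pq : 4*p*(1-q) ≤ 1 := by nlinarith [sq_nonneg (2*q-1)]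
  have hkey : (q-p)^2/(2*(1-q)) ≤ (q-p)^2/(8*p*(1-q)^2) := by
    rw [div_le_div_iff₀ (by positivity) (by positivity)]
    have h8 : 8*p*(1-q)^2 ≤ 2*(1-q) := by
      nlinarith [mul_le_mul_of_nonneg_left h4pq h1q.le]
    exact mul_le_mul_of_nonneg_left h8 (sq_nonneg (q-p))
  have part1 : p * Real.log (p / q) + (1 - p) * Real.log ((1 - p) / (1 - q))
      ≤ (1 + 1 / (4 * (1 - q) ^ 2)) * ((q / p - 1) ^ 2 * p / 2) := by
    rw [hRHS]; linarith
  refine ⟨part1, ?_⟩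
  -- positivity of the KL divergence
  have hl1 : Real.log (q/p) < q/p - 1 :=
    Real.log_lt_sub_one_of_pos (by positivity)
      (ne_of_gt ((one_lt_div hp).2 hpq))
  have hl2 : Real.log ((1-q)/(1-p)) < (1-q)/(1-p) - 1 :=
    Real.log_lt_sub_one_of_pos hy0
      (ne_of_lt ((div_lt_one h1p).2 (by linarith)))
  have hDpos : 0 < p * Real.log (p / q) + (1 - p) * Real.log ((1 - p) / (1 - q)) := by
    rw [hlog1, hlog2]
    have m1 : p * Real.log (q/p) < q - p := by
      have h := mul_lt_mul_of_pos_left hl1 hp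
      have e1 : p * (q/p - 1) = q - p := by field_simp
      linarith
    have m2 : (1-p) * Real.log ((1-q)/(1-p)) < p - q := by
      have h := mul_lt_mul_of_pos_left hl2 h1p
      have e2 : (1-p) * ((1-q)/(1-p) - 1) = p - q := by field_simp; ring
      linarith
    have e3 : p * -Real.log (q/p) + (1-p) * -Real.log ((1-q)/(1-p))
        = -(p * Real.log (q/p)) + -((1-p) * Real.log ((1-q)/(1-p))) := by ring
    rw [e3]
    linarith
  -- part 2
  have e1 : (1/p)/(1/p - 1/q) = q/(q-p) := by
    rw [div_eq_div_iff]
    · field_simp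
    · have h' : 1/p - 1/q = (q-p)/(p*q) := by
        field_simp
      rw [h']; positivity
    · exact hqp.ne'
  rw [e1, le_div_iff₀ hDpos]
  have hmul : 4 * (1 - q) ^ 2 / (4 * (1 - q) ^ 2 + 1) * (q / (q - p)) *
      (p * Real.log (p / q) + (1 - p) * Real.log ((1 - p) / (1 - q)))
      ≤ 4 * (1 - q) ^ 2 / (4 * (1 - q) ^ 2 + 1) * (q / (q - p)) *
      ((1 + 1 / (4 * (1 - q) ^ 2)) * ((q / p - 1) ^ 2 * p / 2)) := by
    apply mul_le_mul_of_nonneg_left part1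
    positivity
  have hfin : 4 * (1 - q) ^ 2 / (4 * (1 - q) ^ 2 + 1) * (q / (q - p)) *
      ((1 + 1 / (4 * (1 - q) ^ 2)) * ((q / p - 1) ^ 2 * p / 2)) = q*(q-p)/(2*p) := by
    have hC : (4:ℝ)*(1-q)^2 ≠ 0 := by positivity
    have hC1 : (4:ℝ)*(1-q)^2 + 1 ≠ 0 := by positivity
    field_simp [hC, hC1, hp.ne', hqp.ne']
  have hlast : q*(q-p)/(2*p) ≤ q - p := by
    rw [div_le_iff₀ (by positivity)]
    nlinarith
  rw [hfin] at hmul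
  exact hmul.trans hlast
end

section
/- Let 0 < p < q < 1 with q > 2p. Then D(p‖q) ≤ log(1/(1-q)), and (q-p)/D(p‖q) ≥ (q/(-4·log(1-q)))·(1/p)/((1/p) - (1/q)). -/
/-- For `0 < p < q < 1` with `q > 2p`, the binary KL divergence satisfies
`D(p‖q) ≤ log(1/(1-q))`, and
`(q-p)/D(p‖q) ≥ (q/(-4·log(1-q)))·(1/p)/((1/p) - (1/q))`. -/
theorem kl_bound_large_eps (p q : ℝ) (hp : 0 < p) (hpq : p < q) (hq : q < 1)
    (h2 : 2 * p < q) :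
    p * Real.log (p / q) + (1 - p) * Real.log ((1 - p) / (1 - q))
      ≤ Real.log (1 / (1 - q)) ∧
    (q / (-4 * Real.log (1 - q))) * ((1 / p) / (1 / p - 1 / q))
      ≤ (q - p) /
        (p * Real.log (p / q) + (1 - p) * Real.log ((1 - p) / (1 - q))) := by
  have h1q : (0:ℝ) < 1 - q := by linarith
  have h1p : (0:ℝ) < 1 - p := by linarith
  have hq0 : (0:ℝ) < q := lt_trans hp hpq
  have hL0 : 0 < Real.log (1 / (1 - q)) := Real.log_pos (by rw [lt_div_iff₀ h1q]; linarith)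
  have hDpos : 0 < p * Real.log (p / q) + (1 - p) * Real.log ((1 - p) / (1 - q)) := by
    have h1 : Real.log (q / p) < q / p - 1 :=
      Real.log_lt_sub_one_of_pos (by positivity)
        (by intro h; rw [div_eq_one_iff_eq hp.ne'] at h; linarith)
    have h2' : Real.log ((1 - q) / (1 - p)) ≤ (1 - q) / (1 - p) - 1 :=
      Real.log_le_sub_one_of_pos (by positivity)
    have e1 : Real.log (p / q) = - Real.log (q / p) := by
      rw [Real.log_div hp.ne' hq0.ne', Real.log_div hq0.ne' hp.ne']; ring
    have e2 : Real.log ((1 - p) / (1 - q)) = - Real.log ((1 - q) / (1 - p)) := by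
      rw [Real.log_div h1p.ne' h1q.ne', Real.log_div h1q.ne' h1p.ne']; ring
    rw [e1, e2]
    have hA : p * Real.log (q / p) < p * (q / p - 1) := (mul_lt_mul_iff_right₀ hp).2 h1
    have hB : (1 - p) * Real.log ((1 - q) / (1 - p)) ≤ (1 - p) * ((1 - q) / (1 - p) - 1) :=
      mul_le_mul_of_nonneg_left h2' h1p.le
    have hz : p * (q / p - 1) + (1 - p) * ((1 - q) / (1 - p) - 1) = 0 := by
      field_simp
      ring
    nlinarith
  have hDleL : p * Real.log (p / q) + (1 - p) * Real.log ((1 - p) / (1 - q))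
      ≤ Real.log (1 / (1 - q)) := by
    have hA : p * Real.log (p / q) ≤ 0 :=
      mul_nonpos_of_nonneg_of_nonpos hp.le
        (Real.log_nonpos (by positivity) (by rw [div_le_one hq0]; linarith))
    have hlogB : 0 ≤ Real.log ((1 - p) / (1 - q)) :=
      Real.log_nonneg (by rw [le_div_iff₀ h1q]; linarith)
    have hB1 : (1 - p) * Real.log ((1 - p) / (1 - q)) ≤ Real.log ((1 - p) / (1 - q)) := by
      nlinarith
    have hB2 : Real.log ((1 - p) / (1 - q)) ≤ Real.log (1 / (1 - q)) :=
      Real.log_le_log (by positivity) (by apply div_le_div_of_nonneg_right _ h1q.le; linarith)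
    linarith
  refine ⟨hDleL, ?_⟩
  have hlogneg : Real.log (1 - q) < 0 := Real.log_neg h1q (by linarith)
  have hinv : (0:ℝ) < 1 / p - 1 / q := by
    rw [sub_pos]; exact one_div_lt_one_div_of_lt hp hpq
  have hqp : (0:ℝ) < q - p := by linarith
  have key : q / (-4 * Real.log (1 - q)) * ((1 / p) / (1 / p - 1 / q))
      = q ^ 2 / (4 * Real.log (1 / (1 - q)) * (q - p)) := by
    have hLeq : Real.log (1 / (1 - q)) = -Real.log (1 - q) := by
      rw [one_div, Real.log_inv]
    rw [hLeq]
    field_simp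
  rw [key, div_le_div_iff₀ (by positivity) hDpos]
  have hq2 : q ^ 2 ≤ 4 * (q - p) ^ 2 := by nlinarith
  have := mul_le_mul hq2 hDleL hDpos.le (by positivity : (0:ℝ) ≤ 4 * (q - p) ^ 2)
  nlinarith
end

section
/- Let X₁, X₂, … be {0,1}-valued random variables adapted to a filtration generated by Y₁, Y₂, …, with P_i = Pr[X_i = 1 | Y₁,…,Y_{i-1}]. Fix r > 0 and let τ be the last index i with Σ_{j=1}^i P_j ≤ r; assume τ is almost surely bounded by some constant m. Then for any 0 < δ ≤ 1, Pr[Σ_{i=1}^τ X_i > (1+δ)r] ≤ exp(-δ²r/3). -/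
open MeasureTheory

lemma chord_log {x : ℝ} (h0 : 0 ≤ x) (h1 : x ≤ 1) : x * Real.log 2 ≤ Real.log (1 + x) := by
  have hc := strictConcaveOn_log_Ioi.concaveOn
  have h := hc.2 (Set.mem_Ioi.2 one_pos) (Set.mem_Ioi.2 two_pos)
    (by linarith : (0:ℝ) ≤ 1 - x) h0 (by ring)
  have e : (1 - x) • (1:ℝ) + x • (2:ℝ) = 1 + x := by simp [smul_eq_mul]; ring
  rw [e] at h
  simpa [smul_eq_mul, Real.log_one] using h

lemma key_ineq {x : ℝ} (h0 : 0 ≤ x) (h1 : x ≤ 1) :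
    x + x ^ 2 / 3 ≤ (1 + x) * Real.log (1 + x) := by
  set g : ℝ → ℝ := fun t => (1 + t) * Real.log (1 + t) - t - t ^ 2 / 3 with hg
  have hgd : ∀ t : ℝ, -1 < t → HasDerivAt g (Real.log (1 + t) - 2 * t / 3) t := by
    intro t ht
    have h1t : (0:ℝ) < 1 + t := by linarith
    have d1 : HasDerivAt (fun s : ℝ => 1 + s) 1 t := by
      simpa using (hasDerivAt_id t).const_add (1:ℝ)
    have dlog : HasDerivAt (fun s : ℝ => Real.log (1 + s)) (1 / (1 + t)) t := by
      simpa using d1.log h1t.ne'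
    have dmul : HasDerivAt (fun s : ℝ => (1 + s) * Real.log (1 + s))
        (1 * Real.log (1 + t) + (1 + t) * (1 / (1 + t))) t := d1.mul dlog
    have dpoly : HasDerivAt (fun s : ℝ => s + s ^ 2 / 3) (1 + 2 * t / 3) t := by
      have := (hasDerivAt_id t).add ((hasDerivAt_pow 2 t).div_const 3)
      exact this.congr_deriv (by norm_num)
    have := dmul.sub dpoly
    have heq : 1 * Real.log (1 + t) + (1 + t) * (1 / (1 + t)) - (1 + 2 * t / 3)
        = Real.log (1 + t) - 2 * t / 3 := by field_simp; ring
    rw [heq] at this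
    exact this.congr_of_eventuallyEq (Filter.Eventually.of_forall fun s => by
      simp only [hg, Pi.sub_apply]; ring)
  have hmono : MonotoneOn g (Set.Icc 0 1) := by
    apply monotoneOn_of_deriv_nonneg (convex_Icc 0 1)
    · intro t ht
      exact ((hgd t (by linarith [ht.1])).continuousAt).continuousWithinAt
    · intro t ht
      rw [interior_Icc] at ht
      exact ((hgd t (by linarith [ht.1])).differentiableAt).differentiableWithinAt
    · intro t ht
      rw [interior_Icc] at ht
      rw [(hgd t (by linarith [ht.1])).deriv]
      have hch := chord_log ht.1.le ht.2.le
      nlinarith [Real.log_two_gt_d9, ht.1.le]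
  have h := hmono (Set.mem_Icc.2 ⟨le_refl 0, zero_le_one⟩) (Set.mem_Icc.2 ⟨h0, h1⟩) h0
  simp [hg, Real.log_one] at h
  linarith

/-- Martingale upper-tail Chernoff bound: let `X i ∈ {0,1}` be adapted to a filtration `ℱ`,
with conditional probabilities `P i = Pr[X i = 1 | ℱ (i-1)]`. Fix `r > 0` and let `τ ω` be
the last index `i` with `∑_{j=1}^i P j ω ≤ r`; assume `τ ≤ m` surely. Then for any
`0 < δ ≤ 1`, `Pr[∑_{i=1}^τ X i > (1+δ)r] ≤ exp(-δ²r/3)`. -/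
theorem martingale_chernoff_upper {Ω : Type*} [MeasurableSpace Ω]
    (μ : Measure Ω) [IsProbabilityMeasure μ]
    (ℱ : ℕ → MeasurableSpace Ω) (hℱ : ∀ i, ℱ i ≤ ‹MeasurableSpace Ω›)
    (hℱmono : Monotone ℱ)
    (X P : ℕ → Ω → ℝ)
    (hX01 : ∀ i ω, X i ω = 0 ∨ X i ω = 1)
    (hXmeas : ∀ i, Measurable[ℱ i] (X i))
    (hP0 : ∀ i ω, 0 ≤ P i ω)
    (hPmeas : ∀ i : ℕ, 1 ≤ i → Measurable[ℱ (i - 1)] (P i))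
    (hP : ∀ i : ℕ, 1 ≤ i → P i =ᵐ[μ] μ[X i | ℱ (i - 1)])
    (r : ℝ) (hr : 0 < r) (m : ℕ) (τ : Ω → ℕ)
    (hτlast : ∀ ω, (∑ j ∈ Finset.Icc 1 (τ ω), P j ω ≤ r) ∧
      ∀ i : ℕ, (∑ j ∈ Finset.Icc 1 i, P j ω ≤ r) → i ≤ τ ω)
    (hτm : ∀ ω, τ ω ≤ m)
    (δ : ℝ) (hδ0 : 0 < δ) (hδ1 : δ ≤ 1) :
    μ {ω | (1 + δ) * r < ∑ i ∈ Finset.Icc 1 (τ ω), X i ω}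
      ≤ ENNReal.ofReal (Real.exp (-(δ ^ 2) * r / 3)) := by
  classical
  have hδpos : (0:ℝ) < 1 + δ := by linarith
  set c₀ := Real.log (1 + δ) with hc₀
  have hc₀pos : 0 < c₀ := Real.log_pos (by linarith)
  set C : ℕ → Ω → ℝ := fun n ω => ∑ j ∈ Finset.Icc 1 n, P j ω with hCdef
  set G : ℕ → Ω → ℝ := fun i ω =>
    if C i ω ≤ r then (1 + δ * X i ω) * Real.exp (-(δ * P i ω)) else 1 with hGdef
  set M : ℕ → Ω → ℝ := fun n ω => ∏ i ∈ Finset.Icc 1 n, G i ω with hMdef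
  -- the defining property of τ
  have hiff : ∀ ω (i : ℕ), C i ω ≤ r ↔ i ≤ τ ω := by
    intro ω i
    constructor
    · exact (hτlast ω).2 i
    · intro hi
      calc C i ω ≤ C (τ ω) ω :=
            Finset.sum_le_sum_of_subset_of_nonneg
              (Finset.Icc_subset_Icc_right hi) (fun j _ _ => hP0 j ω)
        _ ≤ r := (hτlast ω).1
  -- bounds on G
  have hX0le : ∀ i ω, 0 ≤ X i ω := by
    intro i ω; rcases hX01 i ω with h | h <;> rw [h] <;> norm_num
  have hXle1 : ∀ i ω, X i ω ≤ 1 := by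
    intro i ω; rcases hX01 i ω with h | h <;> rw [h] <;> norm_num
  have hGnonneg : ∀ i ω, 0 ≤ G i ω := by
    intro i ω; simp only [hGdef]; split_ifs
    · have h1 : (0:ℝ) ≤ 1 + δ * X i ω := by nlinarith [hX0le i ω]
      positivity
    · norm_num
  have hGle : ∀ i ω, G i ω ≤ 1 + δ := by
    intro i ω; simp only [hGdef]; split_ifs
    · have h1 : 1 + δ * X i ω ≤ 1 + δ := by nlinarith [hXle1 i ω]
      have h2 : Real.exp (-(δ * P i ω)) ≤ 1 := by
        rw [Real.exp_le_one_iff]; nlinarith [hP0 i ω]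
      have h0 : (0:ℝ) ≤ 1 + δ * X i ω := by nlinarith [hX0le i ω]
      nlinarith [Real.exp_pos (-(δ * P i ω))]
    · linarith
  -- measurability
  have hCmeas : ∀ (n i : ℕ), i ≤ n + 1 → Measurable[ℱ n] (C i) := by
    intro n i hi
    apply Finset.measurable_sum
    intro j hj
    rw [Finset.mem_Icc] at hj
    exact (hPmeas j hj.1).mono (hℱmono (by omega)) le_rfl
  have hGmeasF : ∀ i : ℕ, 1 ≤ i → Measurable[ℱ i] (G i) := by
    intro i hi
    have hc : MeasurableSet[ℱ i] {ω | C i ω ≤ r} :=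
      measurableSet_le ((hCmeas (i - 1) i (by omega)).mono (hℱmono (by omega)) le_rfl)
        measurable_const
    have hPi : Measurable[ℱ i] (P i) :=
      (hPmeas i hi).mono (hℱmono (by omega)) le_rfl
    exact Measurable.ite hc
      ((measurable_const.add (measurable_const.mul (hXmeas i))).mul
        ((measurable_const.mul hPi).neg.exp))
      measurable_const
  have hMmeasF : ∀ n, Measurable[ℱ n] (M n) := by
    intro n
    apply Finset.measurable_prod
    intro i hi
    rw [Finset.mem_Icc] at hi
    exact (hGmeasF i hi.1).mono (hℱmono hi.2) le_rfl
  -- integrability helper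
  have hbint : ∀ (f : Ω → ℝ) (K : ℝ), Measurable f → (∀ ω, ‖f ω‖ ≤ K) → Integrable f μ := by
    intro f K hf hb
    exact ⟨hf.aestronglyMeasurable, HasFiniteIntegral.of_bounded (ae_of_all μ hb)⟩
  have hMb : ∀ n ω, M n ω ≤ (1 + δ) ^ n := by
    intro n ω
    calc M n ω ≤ ∏ _i ∈ Finset.Icc 1 n, (1 + δ) :=
          Finset.prod_le_prod (fun i _ => hGnonneg i ω) (fun i _ => hGle i ω)
      _ = (1 + δ) ^ (Finset.Icc 1 n).card := Finset.prod_const _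
      _ = (1 + δ) ^ n := by rw [Nat.card_Icc, Nat.add_sub_cancel]
  have hMnonneg : ∀ n ω, 0 ≤ M n ω := fun n ω =>
    Finset.prod_nonneg fun i _ => hGnonneg i ω
  have hMint : ∀ n, Integrable (M n) μ := by
    intro n
    refine hbint (M n) ((1 + δ) ^ n) ((hMmeasF n).mono (hℱ n) le_rfl) fun ω => ?_
    rw [Real.norm_eq_abs, abs_le]
    exact ⟨by nlinarith [hMnonneg n ω, pow_pos hδpos n], hMb n ω⟩
  have hGint : ∀ i : ℕ, 1 ≤ i → Integrable (G i) μ := by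
    intro i hi
    refine hbint (G i) (1 + δ) ((hGmeasF i hi).mono (hℱ i) le_rfl) fun ω => ?_
    rw [Real.norm_eq_abs, abs_le]
    exact ⟨by linarith [hGnonneg i ω], hGle i ω⟩
  -- the key supermartingale step
  have hstep : ∀ n, ∫ ω, M (n + 1) ω ∂μ ≤ ∫ ω, M n ω ∂μ := by
    intro n
    haveI : SigmaFinite (μ.trim (hℱ n)) := by infer_instance
    have hPn : Measurable[ℱ n] (P (n + 1)) := by
      simpa using hPmeas (n + 1) (by omega)
    have hPn_ae : P (n + 1) =ᵐ[μ] μ[X (n + 1)|ℱ n] := by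
      simpa using hP (n + 1) (by omega)
    set A : Ω → ℝ := fun ω =>
      if C (n + 1) ω ≤ r then Real.exp (-(δ * P (n + 1) ω)) else 1 with hAdef
    set B : Ω → ℝ := fun ω =>
      if C (n + 1) ω ≤ r then δ * Real.exp (-(δ * P (n + 1) ω)) else 0 with hBdef
    have hdecomp : G (n + 1) = A + B * X (n + 1) := by
      funext ω
      simp only [hGdef, hAdef, hBdef, Pi.add_apply, Pi.mul_apply]
      split_ifs <;> ring
    have hcn : MeasurableSet[ℱ n] {ω | C (n + 1) ω ≤ r} :=
      measurableSet_le (hCmeas n (n + 1) le_rfl) measurable_const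
    have hAmeas : Measurable[ℱ n] A :=
      Measurable.ite hcn ((measurable_const.mul hPn).neg.exp) measurable_const
    have hBmeas : Measurable[ℱ n] B :=
      Measurable.ite hcn (measurable_const.mul ((measurable_const.mul hPn).neg.exp))
        measurable_const
    have hAbd : ∀ ω, ‖A ω‖ ≤ 1 := by
      intro ω
      rw [Real.norm_eq_abs, abs_le]
      simp only [hAdef]
      split_ifs
      · constructor
        · linarith [Real.exp_pos (-(δ * P (n + 1) ω))]
        · rw [Real.exp_le_one_iff]; nlinarith [hP0 (n + 1) ω]
      · norm_num
    have hBbd : ∀ ω, ‖B ω‖ ≤ δ := by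
      intro ω
      rw [Real.norm_eq_abs, abs_le]
      simp only [hBdef]
      split_ifs
      · have h2 : Real.exp (-(δ * P (n + 1) ω)) ≤ 1 := by
          rw [Real.exp_le_one_iff]; nlinarith [hP0 (n + 1) ω]
        constructor
        · nlinarith [Real.exp_pos (-(δ * P (n + 1) ω))]
        · nlinarith [Real.exp_pos (-(δ * P (n + 1) ω))]
      · constructor <;> linarith
    have hAint : Integrable A μ := hbint A 1 (hAmeas.mono (hℱ n) le_rfl) hAbd
    have hXint : Integrable (X (n + 1)) μ := by
      refine hbint (X (n + 1)) 1 ((hXmeas (n + 1)).mono (hℱ (n + 1)) le_rfl) fun ω => ?_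
      rw [Real.norm_eq_abs, abs_le]
      exact ⟨by linarith [hX0le (n + 1) ω], hXle1 (n + 1) ω⟩
    have hBXint : Integrable (B * X (n + 1)) μ := by
      refine hbint _ δ ((hBmeas.mono (hℱ n) le_rfl).mul
        ((hXmeas (n + 1)).mono (hℱ (n + 1)) le_rfl)) fun ω => ?_
      simp only [Pi.mul_apply, Real.norm_eq_abs, abs_mul]
      calc |B ω| * |X (n + 1) ω| ≤ δ * 1 := by
            apply mul_le_mul
            · simpa [Real.norm_eq_abs] using hBbd ω
            · rw [abs_le]; exact ⟨by linarith [hX0le (n + 1) ω], hXle1 (n + 1) ω⟩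
            · exact abs_nonneg _
            · exact hδ0.le
        _ = δ := mul_one δ
    have hGn1int : Integrable (G (n + 1)) μ := hGint (n + 1) (by omega)
    have hMGint : Integrable (M n * G (n + 1)) μ := by
      refine hbint _ ((1 + δ) ^ n * (1 + δ)) (((hMmeasF n).mono (hℱ n) le_rfl).mul
        ((hGmeasF (n + 1) (by omega)).mono (hℱ (n + 1)) le_rfl)) fun ω => ?_
      simp only [Pi.mul_apply, Real.norm_eq_abs, abs_mul]
      apply mul_le_mul
      · rw [abs_le]
        exact ⟨by nlinarith [hMnonneg n ω, pow_pos hδpos n], hMb n ω⟩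
      · rw [abs_le]; exact ⟨by linarith [hGnonneg (n + 1) ω], hGle (n + 1) ω⟩
      · exact abs_nonneg _
      · positivity
    -- conditional expectation of G (n+1) is at most 1
    have hcond : μ[G (n + 1)|ℱ n] ≤ᵐ[μ] fun _ => (1:ℝ) := by
      have h1 : μ[G (n + 1)|ℱ n] =ᵐ[μ] μ[A|ℱ n] + μ[B * X (n + 1)|ℱ n] := by
        rw [hdecomp]; exact condExp_add hAint hBXint _
      have h2 : μ[A|ℱ n] = A :=
        condExp_of_stronglyMeasurable (hℱ n) hAmeas.stronglyMeasurable hAint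
      have h3 : μ[B * X (n + 1)|ℱ n] =ᵐ[μ] B * μ[X (n + 1)|ℱ n] :=
        condExp_mul_of_stronglyMeasurable_left hBmeas.stronglyMeasurable hBXint hXint
      filter_upwards [h1, h3, hPn_ae] with ω h1ω h3ω h4ω
      rw [h1ω, h2]
      simp only [Pi.add_apply, Pi.mul_apply]
      rw [h3ω]
      simp only [Pi.mul_apply]
      rw [← h4ω]
      simp only [hAdef, hBdef]
      split_ifs with hcnd
      · have hx := Real.add_one_le_exp (δ * P (n + 1) ω)
        have hm : (δ * P (n + 1) ω + 1) * Real.exp (-(δ * P (n + 1) ω))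
            ≤ Real.exp (δ * P (n + 1) ω) * Real.exp (-(δ * P (n + 1) ω)) :=
          mul_le_mul_of_nonneg_right hx (Real.exp_pos _).le
        rw [← Real.exp_add, add_neg_cancel, Real.exp_zero] at hm
        nlinarith [Real.exp_pos (-(δ * P (n + 1) ω))]
      · norm_num
    have hMsucc : ∀ ω, M (n + 1) ω = M n ω * G (n + 1) ω := by
      intro ω
      simp only [hMdef]
      exact Finset.prod_Icc_succ_top (by omega) _
    calc ∫ ω, M (n + 1) ω ∂μ = ∫ ω, (M n * G (n + 1)) ω ∂μ := by
          apply integral_congr_ae; exact ae_of_all μ fun ω => hMsucc ω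
      _ = ∫ ω, (μ[M n * G (n + 1)|ℱ n]) ω ∂μ := (integral_condExp (hℱ n)).symm
      _ ≤ ∫ ω, M n ω ∂μ := by
          apply integral_mono_ae integrable_condExp (hMint n)
          have h5 : μ[M n * G (n + 1)|ℱ n] =ᵐ[μ] M n * μ[G (n + 1)|ℱ n] :=
            condExp_mul_of_stronglyMeasurable_left (hMmeasF n).stronglyMeasurable hMGint hGn1int
          filter_upwards [h5, hcond] with ω h5ω h6ω
          rw [h5ω]
          simp only [Pi.mul_apply]
          calc M n ω * (μ[G (n + 1)|ℱ n]) ω ≤ M n ω * 1 :=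
                mul_le_mul_of_nonneg_left h6ω (hMnonneg n ω)
            _ = M n ω := mul_one _
  -- hence ∫ M m ≤ 1
  have hMle1 : ∀ n, ∫ ω, M n ω ∂μ ≤ 1 := by
    intro n
    induction n with
    | zero =>
      have : ∀ ω, M 0 ω = 1 := by
        intro ω; simp [hMdef]
      rw [integral_congr_ae (ae_of_all μ this)]
      simp
    | succ n ih => exact (hstep n).trans ih
  -- value of M m
  have hMm : ∀ ω, M m ω =
      Real.exp (c₀ * (∑ i ∈ Finset.Icc 1 (τ ω), X i ω) - δ * C (τ ω) ω) := by
    intro ω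
    have hsub : Finset.Icc 1 (τ ω) ⊆ Finset.Icc 1 m := Finset.Icc_subset_Icc_right (hτm ω)
    have h1 : M m ω = ∏ i ∈ Finset.Icc 1 (τ ω), G i ω := by
      simp only [hMdef]
      refine (Finset.prod_subset hsub ?_).symm
      intro i hi hni
      rw [Finset.mem_Icc] at hi hni
      have hgt : τ ω < i := by omega
      have : ¬ C i ω ≤ r := by
        intro hle
        exact absurd ((hiff ω i).1 hle) (by omega)
      simp only [hGdef, if_neg this]
    rw [h1]
    have h2 : ∀ i ∈ Finset.Icc 1 (τ ω), G i ω = Real.exp (c₀ * X i ω - δ * P i ω) := by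
      intro i hi
      rw [Finset.mem_Icc] at hi
      have hcnd : C i ω ≤ r := (hiff ω i).2 hi.2
      simp only [hGdef, if_pos hcnd]
      have he : 1 + δ * X i ω = Real.exp (c₀ * X i ω) := by
        rcases hX01 i ω with h | h <;> rw [h] <;>
          simp [hc₀, Real.exp_log hδpos]
      rw [he, ← Real.exp_add]
      ring_nf
    rw [Finset.prod_congr rfl h2, ← Real.exp_sum]
    congr 1
    rw [Finset.sum_sub_distrib, ← Finset.mul_sum, ← Finset.mul_sum]
  -- Markov
  set ε := Real.exp (c₀ * ((1 + δ) * r) - δ * r) with hεdef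
  have hεpos : 0 < ε := Real.exp_pos _
  have hsubset : {ω | (1 + δ) * r < ∑ i ∈ Finset.Icc 1 (τ ω), X i ω}
      ⊆ {ω | ε ≤ M m ω} := by
    intro ω hω
    simp only [Set.mem_setOf_eq] at hω ⊢
    rw [hMm ω, hεdef]
    apply Real.exp_le_exp.2
    have hC : C (τ ω) ω ≤ r := (hτlast ω).1
    nlinarith [hω, hc₀pos, hδ0, hC]
  have hmark := mul_meas_ge_le_integral_of_nonneg
    (ae_of_all μ fun ω => hMnonneg m ω) (hMint m) ε
  have hfin : μ {ω | ε ≤ M m ω} ≠ ⊤ := measure_ne_top μ _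
  have htr : (μ {ω | ε ≤ M m ω}).toReal ≤ 1 / ε := by
    rw [le_div_iff₀ hεpos]
    calc (μ {ω | ε ≤ M m ω}).toReal * ε = ε * (μ {ω | ε ≤ M m ω}).toReal := mul_comm _ _
      _ ≤ ∫ ω, M m ω ∂μ := hmark
      _ ≤ 1 := hMle1 m
  calc μ {ω | (1 + δ) * r < ∑ i ∈ Finset.Icc 1 (τ ω), X i ω}
      ≤ μ {ω | ε ≤ M m ω} := measure_mono hsubset
    _ = ENNReal.ofReal ((μ {ω | ε ≤ M m ω}).toReal) := (ENNReal.ofReal_toReal hfin).symm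
    _ ≤ ENNReal.ofReal (1 / ε) := ENNReal.ofReal_le_ofReal htr
    _ ≤ ENNReal.ofReal (Real.exp (-(δ ^ 2) * r / 3)) := by
        apply ENNReal.ofReal_le_ofReal
        rw [hεdef, one_div, ← Real.exp_neg]
        apply Real.exp_le_exp.2
        have hk := key_ineq hδ0.le hδ1
        have : (δ + δ ^ 2 / 3) * r ≤ ((1 + δ) * c₀) * r := by
          apply mul_le_mul_of_nonneg_right _ hr.le
          rw [hc₀]; linarith [hk]
        nlinarith [this]
end

section
/- Let X₁, X₂, … be {0,1}-valued random variables adapted to a filtration, with conditional probabilities P_i = Pr[X_i = 1 | past]. Fix r > 0 and let τ be the first index i with Σ_{j=1}^i P_j > r; assume τ ≤ m almost surely for some constant m. Then for any 0 < δ ≤ 1, Pr[Σ_{i=1}^τ X_i < (1-δ)r] ≤ exp(-δ²r/2). -/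
open MeasureTheory

/-- Elementary inequality: `exp (-x) ≤ 1 - x + x^2/2` for `0 ≤ x`. -/
lemma aux_exp_neg_le_quadratic {x : ℝ} (hx : 0 ≤ x) :
    Real.exp (-x) ≤ 1 - x + x ^ 2 / 2 := by
  have hq : 1 + x + x ^ 2 / 2 ≤ Real.exp x := Real.quadratic_le_exp_of_nonneg hx
  have hmul : Real.exp (-x) * Real.exp x = 1 := by
    rw [← Real.exp_add]; simp
  have hpos : (0:ℝ) < Real.exp x := Real.exp_pos x
  have hnn : (0:ℝ) ≤ 1 - x + x ^ 2 / 2 := by nlinarith [sq_nonneg (1 - x)]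
  nlinarith [mul_le_mul_of_nonneg_left hq hnn, sq_nonneg (x ^ 2)]

/-- Martingale lower-tail Chernoff bound: let `X i ∈ {0,1}` be adapted to a filtration `ℱ`,
with conditional probabilities `P i = Pr[X i = 1 | ℱ (i-1)]`. Fix `r > 0` and let `τ ω` be
the first index `i` with `∑_{j=1}^i P j ω > r`; assume `τ ≤ m` surely. Then for any
`0 < δ ≤ 1`, `Pr[∑_{i=1}^τ X i < (1-δ)r] ≤ exp(-δ²r/2)`. -/
theorem martingale_chernoff_lower {Ω : Type*} [MeasurableSpace Ω]
    (μ : Measure Ω) [IsProbabilityMeasure μ]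
    (ℱ : ℕ → MeasurableSpace Ω) (hℱ : ∀ i, ℱ i ≤ ‹MeasurableSpace Ω›)
    (hℱmono : Monotone ℱ)
    (X P : ℕ → Ω → ℝ)
    (hX01 : ∀ i ω, X i ω = 0 ∨ X i ω = 1)
    (hXmeas : ∀ i, Measurable[ℱ i] (X i))
    (hP0 : ∀ i ω, 0 ≤ P i ω)
    (hPmeas : ∀ i : ℕ, 1 ≤ i → Measurable[ℱ (i - 1)] (P i))
    (hP : ∀ i : ℕ, 1 ≤ i → P i =ᵐ[μ] μ[X i | ℱ (i - 1)])
    (r : ℝ) (hr : 0 < r) (m : ℕ) (τ : Ω → ℕ)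
    (hτfirst : ∀ ω, (r < ∑ j ∈ Finset.Icc 1 (τ ω), P j ω) ∧
      ∀ i : ℕ, i < τ ω → ∑ j ∈ Finset.Icc 1 i, P j ω ≤ r)
    (hτm : ∀ ω, τ ω ≤ m)
    (δ : ℝ) (hδ0 : 0 < δ) (hδ1 : δ ≤ 1) :
    μ {ω | ∑ i ∈ Finset.Icc 1 (τ ω), X i ω < (1 - δ) * r}
      ≤ ENNReal.ofReal (Real.exp (-(δ ^ 2) * r / 2)) := by
  classical
  set a : ℝ := 1 - Real.exp (-δ) with ha_def
  have hexpδ1 : Real.exp (-δ) < 1 := Real.exp_lt_one_iff.mpr (by linarith)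
  have ha0 : 0 < a := by rw [ha_def]; linarith
  have ha1 : a < 1 := by have := Real.exp_pos (-δ); rw [ha_def]; linarith
  -- τ is at least 1
  have hτ1 : ∀ ω, 1 ≤ τ ω := by
    intro ω
    rcases Nat.eq_zero_or_pos (τ ω) with h | h
    · exfalso
      have h1 := (hτfirst ω).1
      rw [h] at h1
      simp at h1
      linarith
    · exact h
  -- characterization of {τ ≤ n}
  have hτle : ∀ (n : ℕ) ω, τ ω ≤ n ↔ r < ∑ j ∈ Finset.Icc 1 n, P j ω := by
    intro n ω
    constructor
    · intro h
      refine lt_of_lt_of_le (hτfirst ω).1 ?_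
      exact Finset.sum_le_sum_of_subset_of_nonneg
        (Finset.Icc_subset_Icc le_rfl h) (fun j _ _ => hP0 j ω)
    · intro h
      by_contra hc
      push_neg at hc
      exact absurd ((hτfirst ω).2 n hc) (not_le.mpr h)
  -- measurability of {τ ≤ n} wrt ℱ n
  have hτmeasSet : ∀ n : ℕ, MeasurableSet[ℱ n] {ω | τ ω ≤ n} := by
    intro n
    have heq : {ω | τ ω ≤ n} = {ω | r < ∑ j ∈ Finset.Icc 1 n, P j ω} := by
      ext ω; exact hτle n ω
    rw [heq]
    have hsum : Measurable[ℱ n] fun ω => ∑ j ∈ Finset.Icc 1 n, P j ω := by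
      apply Finset.measurable_sum
      intro j hj
      rw [Finset.mem_Icc] at hj
      exact (hPmeas j hj.1).mono (hℱmono (by omega)) le_rfl
    exact measurableSet_lt measurable_const hsum
  -- truncated variables
  set W : ℕ → Ω → ℝ := fun j ω => if j ≤ τ ω then X j ω else 0 with hW_def
  set V : ℕ → Ω → ℝ := fun j ω => if j ≤ τ ω then P j ω else 0 with hV_def
  have hW01 : ∀ j ω, W j ω = 0 ∨ W j ω = 1 := by
    intro j ω
    rw [hW_def]
    by_cases h : j ≤ τ ω
    · simp only [h, if_true]; exact hX01 j ω
    · simp [h]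
  have hV0 : ∀ j ω, 0 ≤ V j ω := by
    intro j ω
    rw [hV_def]
    by_cases h : j ≤ τ ω
    · simp only [h, if_true]; exact hP0 j ω
    · simp [h]
  -- the set {j ≤ τ} is ℱ (j-1)-measurable for 1 ≤ j
  have hjτSet : ∀ j : ℕ, 1 ≤ j → MeasurableSet[ℱ (j - 1)] {ω | j ≤ τ ω} := by
    intro j hj
    have heq : {ω | j ≤ τ ω} = {ω | τ ω ≤ j - 1}ᶜ := by
      ext ω; simp only [Set.mem_compl_iff, Set.mem_setOf_eq]; omega
    rw [heq]
    exact (hτmeasSet (j - 1)).compl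
  have hWmeas : ∀ (n j : ℕ), 1 ≤ j → j ≤ n → Measurable[ℱ n] (W j) := by
    intro n j hj hjn
    have h1 : Measurable[ℱ n] (X j) := (hXmeas j).mono (hℱmono hjn) le_rfl
    have h2 : MeasurableSet[ℱ n] {ω | j ≤ τ ω} :=
      hℱmono (show j - 1 ≤ n by omega) _ (hjτSet j hj)
    have : W j = Set.indicator {ω | j ≤ τ ω} (X j) := by
      funext ω
      rw [hW_def]
      by_cases h : j ≤ τ ω <;> simp [Set.indicator, h]
    rw [this]
    exact h1.indicator h2
  have hVmeas : ∀ (n j : ℕ), 1 ≤ j → j ≤ n → Measurable[ℱ n] (V j) := by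
    intro n j hj hjn
    have h1 : Measurable[ℱ n] (P j) := (hPmeas j hj).mono (hℱmono (by omega)) le_rfl
    have h2 : MeasurableSet[ℱ n] {ω | j ≤ τ ω} :=
      hℱmono (show j - 1 ≤ n by omega) _ (hjτSet j hj)
    have : V j = Set.indicator {ω | j ≤ τ ω} (P j) := by
      funext ω
      rw [hV_def]
      by_cases h : j ≤ τ ω <;> simp [Set.indicator, h]
    rw [this]
    exact h1.indicator h2
  -- the supermartingale
  set g : ℕ → Ω → ℝ := fun n ω =>
    Real.exp (∑ j ∈ Finset.Icc 1 n, (a * V j ω - δ * W j ω)) with hg_def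
  have hg_pos : ∀ n ω, 0 < g n ω := fun n ω => Real.exp_pos _
  have hgmeas : ∀ n, Measurable[ℱ n] (g n) := by
    intro n
    apply Real.measurable_exp.comp
    apply Finset.measurable_sum
    intro j hj
    rw [Finset.mem_Icc] at hj
    exact ((hVmeas n j hj.1 hj.2).const_mul a).sub ((hWmeas n j hj.1 hj.2).const_mul δ)
  -- expansion of g (n+1)
  have hIcc_succ : ∀ (n : ℕ) (f : ℕ → ℝ),
      ∑ j ∈ Finset.Icc 1 (n + 1), f j = ∑ j ∈ Finset.Icc 1 n, f j + f (n + 1) := by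
    intro n f
    rw [← Finset.insert_Icc_right_eq_Icc_add_one (by omega : 1 ≤ n + 1),
      Finset.sum_insert (by simp)]
    ring
  have hg_succ : ∀ n ω, g (n + 1) ω
      = (g n ω * Real.exp (a * V (n + 1) ω)) * Real.exp (-(δ * W (n + 1) ω)) := by
    intro n ω
    rw [hg_def]
    simp only
    rw [hIcc_succ n (fun j => a * V j ω - δ * W j ω), ← Real.exp_add, ← Real.exp_add]
    congr 1
    ring
  -- exp(-δ W) = 1 - a W
  have hexpW : ∀ j ω, Real.exp (-(δ * W j ω)) = 1 - a * W j ω := by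
    intro j ω
    rcases hW01 j ω with h | h
    · rw [h]; simp
    · rw [h, ha_def]; simp
  -- a.e. bound P j ≤ 1
  have hXmeas' : ∀ j, Measurable (X j) := fun j => (hXmeas j).mono (hℱ j) le_rfl
  have hXint : ∀ j, Integrable (X j) μ := by
    intro j
    refine Integrable.mono' (integrable_const 1) (hXmeas' j).aestronglyMeasurable ?_
    refine ae_of_all _ fun ω => ?_
    rcases hX01 j ω with h | h <;> simp [h]
  have hPae : ∀ j : ℕ, 1 ≤ j → ∀ᵐ ω ∂μ, P j ω ≤ 1 := by
    intro j hj
    have h1 : μ[X j | ℱ (j - 1)] ≤ᵐ[μ] μ[(fun _ => (1:ℝ)) | ℱ (j - 1)] := by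
      refine condExp_mono (hXint j) (integrable_const 1) ?_
      refine ae_of_all _ fun ω => ?_
      rcases hX01 j ω with h | h <;> simp [h]
    have h2 : μ[(fun _ => (1:ℝ)) | ℱ (j - 1)] = fun _ => (1:ℝ) :=
      condExp_const (hℱ (j - 1)) 1
    filter_upwards [hP j hj, h1] with ω hω h1ω
    rw [hω]
    rw [h2] at h1ω
    exact h1ω
  -- a.e. bound on partial sums of V
  have hQbd : ∀ᵐ ω ∂μ, ∀ n : ℕ, ∑ j ∈ Finset.Icc 1 n, V j ω ≤ r + 1 := by
    have hPm : ∀ᵐ ω ∂μ, ∀ j : ℕ, j ∈ Finset.Icc 1 m → P j ω ≤ 1 := by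
      rw [ae_all_iff]
      intro j
      by_cases hj : j ∈ Finset.Icc 1 m
      · rw [Finset.mem_Icc] at hj
        filter_upwards [hPae j hj.1] with ω hω _
        exact hω
      · exact ae_of_all _ fun ω h => absurd h hj
    filter_upwards [hPm] with ω hω n
    have h1 : ∑ j ∈ Finset.Icc 1 n, V j ω ≤ ∑ j ∈ Finset.Icc 1 (τ ω), P j ω := by
      have : ∑ j ∈ Finset.Icc 1 n, V j ω
          = ∑ j ∈ (Finset.Icc 1 n).filter (fun j => j ≤ τ ω), P j ω := by
        rw [Finset.sum_filter, hV_def]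
      rw [this]
      refine Finset.sum_le_sum_of_subset_of_nonneg ?_ (fun j _ _ => hP0 j ω)
      intro j hj
      simp only [Finset.mem_filter, Finset.mem_Icc] at hj ⊢
      exact ⟨hj.1.1, hj.2⟩
    have h2 : ∑ j ∈ Finset.Icc 1 (τ ω), P j ω
        = ∑ j ∈ Finset.Icc 1 (τ ω - 1), P j ω + P (τ ω) ω := by
      have hτω := hτ1 ω
      have : τ ω = (τ ω - 1) + 1 := by omega
      rw [this, hIcc_succ (τ ω - 1) (fun j => P j ω), ← this]
    have h3 : ∑ j ∈ Finset.Icc 1 (τ ω - 1), P j ω ≤ r :=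
      (hτfirst ω).2 (τ ω - 1) (by have := hτ1 ω; omega)
    have h4 : P (τ ω) ω ≤ 1 := hω (τ ω) (Finset.mem_Icc.mpr ⟨hτ1 ω, hτm ω⟩)
    linarith
  -- a.e. bound on g and integrability
  have hgbd : ∀ᵐ ω ∂μ, ∀ n : ℕ, g n ω ≤ Real.exp (a * (r + 1)) := by
    filter_upwards [hQbd] with ω hω n
    rw [hg_def]
    simp only
    rw [Real.exp_le_exp]
    calc ∑ j ∈ Finset.Icc 1 n, (a * V j ω - δ * W j ω)
        ≤ ∑ j ∈ Finset.Icc 1 n, a * V j ω := by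
          refine Finset.sum_le_sum fun j _ => ?_
          have hwnn : 0 ≤ W j ω := by rcases hW01 j ω with h | h <;> simp [h]
          nlinarith
      _ = a * ∑ j ∈ Finset.Icc 1 n, V j ω := by rw [Finset.mul_sum]
      _ ≤ a * (r + 1) := by
          exact mul_le_mul_of_nonneg_left (hω n) ha0.le
  have hgmeas' : ∀ n, Measurable (g n) := fun n => (hgmeas n).mono (hℱ n) le_rfl
  have hgint : ∀ n, Integrable (g n) μ := by
    intro n
    refine Integrable.mono' (integrable_const (Real.exp (a * (r + 1))))
      (hgmeas' n).aestronglyMeasurable ?_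
    filter_upwards [hgbd] with ω hω
    rw [Real.norm_eq_abs, abs_of_pos (hg_pos n ω)]
    exact hω n
  -- the supermartingale step
  have hstep : ∀ n : ℕ, ∫ ω, g (n + 1) ω ∂μ ≤ ∫ ω, g n ω ∂μ := by
    intro n
    set F : Ω → ℝ := fun ω => g n ω * Real.exp (a * V (n + 1) ω) with hF_def
    set F' : Ω → ℝ := fun ω => if n + 1 ≤ τ ω then F ω else 0 with hF'_def
    have hF_pos : ∀ ω, 0 < F ω := fun ω =>
      mul_pos (hg_pos n ω) (Real.exp_pos _)
    have hF'_nonneg : ∀ ω, 0 ≤ F' ω := by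
      intro ω
      rw [hF'_def]
      by_cases h : n + 1 ≤ τ ω
      · simp only [h, if_true]; exact (hF_pos ω).le
      · simp [h]
    -- F equals g n * exp(a V (n+1)); bound it a.e.
    have hFbd : ∀ᵐ ω ∂μ, F ω ≤ Real.exp (a * (r + 1)) := by
      filter_upwards [hQbd] with ω hω
      rw [hF_def, hg_def]
      simp only
      rw [← Real.exp_add, Real.exp_le_exp]
      have h1 : ∑ j ∈ Finset.Icc 1 n, (a * V j ω - δ * W j ω) + a * V (n + 1) ω
          ≤ ∑ j ∈ Finset.Icc 1 (n + 1), (a * V j ω) := by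
        rw [hIcc_succ n (fun j => a * V j ω)]
        have : ∑ j ∈ Finset.Icc 1 n, (a * V j ω - δ * W j ω)
            ≤ ∑ j ∈ Finset.Icc 1 n, a * V j ω := by
          refine Finset.sum_le_sum fun j _ => ?_
          have hwnn : 0 ≤ W j ω := by rcases hW01 j ω with h | h <;> simp [h]
          nlinarith
        linarith
      refine h1.trans ?_
      rw [← Finset.mul_sum]
      exact mul_le_mul_of_nonneg_left (hω (n + 1)) ha0.le
    have hF'bd : ∀ᵐ ω ∂μ, F' ω ≤ Real.exp (a * (r + 1)) := by
      filter_upwards [hFbd] with ω hω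
      rw [hF'_def]
      by_cases h : n + 1 ≤ τ ω
      · simp only [h, if_true]; exact hω
      · simp only [h, if_false]; positivity
    -- measurability of F' wrt ℱ n
    have hVn1meas : Measurable[ℱ n] (V (n + 1)) := by
      have := hVmeas (n + 1) (n + 1) (by omega) le_rfl
      -- V (n+1) is ℱ n measurable directly:
      have h1 : Measurable[ℱ n] (P (n + 1)) := by
        have := hPmeas (n + 1) (by omega)
        simpa using this
      have h2 : MeasurableSet[ℱ n] {ω | n + 1 ≤ τ ω} := by
        have := hjτSet (n + 1) (by omega)
        simpa using this
      have heq : V (n + 1) = Set.indicator {ω | n + 1 ≤ τ ω} (P (n + 1)) := by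
        funext ω
        rw [hV_def]
        by_cases h : n + 1 ≤ τ ω <;> simp only [Set.indicator, Set.mem_setOf_eq, h, if_true, if_false]
      rw [heq]
      exact h1.indicator h2
    have hFmeas : Measurable[ℱ n] F := by
      rw [hF_def]
      exact (hgmeas n).mul (Real.measurable_exp.comp (hVn1meas.const_mul a))
    have hF'meas : Measurable[ℱ n] F' := by
      have h2 : MeasurableSet[ℱ n] {ω | n + 1 ≤ τ ω} := by
        have := hjτSet (n + 1) (by omega)
        simpa using this
      have heq : F' = Set.indicator {ω | n + 1 ≤ τ ω} F := by
        funext ω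
        rw [hF'_def]
        by_cases h : n + 1 ≤ τ ω <;> simp only [Set.indicator, Set.mem_setOf_eq, h, if_true, if_false]
      rw [heq]
      exact hFmeas.indicator h2
    have hFmeas' : Measurable F := hFmeas.mono (hℱ n) le_rfl
    have hF'meas' : Measurable F' := hF'meas.mono (hℱ n) le_rfl
    -- integrability
    have hFint : Integrable F μ := by
      refine Integrable.mono' (integrable_const (Real.exp (a * (r + 1))))
        hFmeas'.aestronglyMeasurable ?_
      filter_upwards [hFbd] with ω hω
      rw [Real.norm_eq_abs, abs_of_pos (hF_pos ω)]
      exact hω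
    have hF'Xint : Integrable (F' * X (n + 1)) μ := by
      refine Integrable.mono' (integrable_const (Real.exp (a * (r + 1))))
        (hF'meas'.mul (hXmeas' (n + 1))).aestronglyMeasurable ?_
      filter_upwards [hF'bd] with ω hω
      rw [Pi.mul_apply, Real.norm_eq_abs, abs_mul]
      have h1 : |F' ω| ≤ Real.exp (a * (r + 1)) := by
        rw [abs_of_nonneg (hF'_nonneg ω)]; exact hω
      have h2 : |X (n + 1) ω| ≤ 1 := by
        rcases hX01 (n + 1) ω with h | h <;> simp [h]
      calc |F' ω| * |X (n + 1) ω| ≤ |F' ω| * 1 :=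
            mul_le_mul_of_nonneg_left h2 (abs_nonneg _)
        _ = |F' ω| := mul_one _
        _ ≤ Real.exp (a * (r + 1)) := h1
    have hF'Pint : Integrable (fun ω => F' ω * P (n + 1) ω) μ := by
      have hPn1meas : Measurable (P (n + 1)) :=
        ((hPmeas (n + 1) (by omega)).mono (hℱ _) le_rfl)
      refine Integrable.mono' (integrable_const (Real.exp (a * (r + 1))))
        (hF'meas'.mul hPn1meas).aestronglyMeasurable ?_
      filter_upwards [hF'bd, hPae (n + 1) (by omega)] with ω hω hPω
      rw [Real.norm_eq_abs, abs_mul]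
      have h1 : |F' ω| ≤ Real.exp (a * (r + 1)) := by
        rw [abs_of_nonneg (hF'_nonneg ω)]; exact hω
      have h2 : |P (n + 1) ω| ≤ 1 := by
        rw [abs_of_nonneg (hP0 (n + 1) ω)]; exact hPω
      calc |F' ω| * |P (n + 1) ω| ≤ |F' ω| * 1 :=
            mul_le_mul_of_nonneg_left h2 (abs_nonneg _)
        _ = |F' ω| := mul_one _
        _ ≤ Real.exp (a * (r + 1)) := h1
    -- the conditional expectation step
    haveI : SigmaFinite (μ.trim (hℱ n)) := by
      have : IsFiniteMeasure (μ.trim (hℱ n)) := isFiniteMeasure_trim (hℱ n)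
      infer_instance
    have hkey : ∫ ω, F' ω * X (n + 1) ω ∂μ = ∫ ω, F' ω * P (n + 1) ω ∂μ := by
      have hpull : μ[F' * X (n + 1) | ℱ n] =ᵐ[μ] F' * μ[X (n + 1) | ℱ n] :=
        condExp_mul_of_stronglyMeasurable_left hF'meas.stronglyMeasurable hF'Xint (hXint (n + 1))
      have hPn1 : P (n + 1) =ᵐ[μ] μ[X (n + 1) | ℱ n] := by
        have := hP (n + 1) (by omega)
        simpa using this
      calc ∫ ω, F' ω * X (n + 1) ω ∂μ
          = ∫ ω, (F' * X (n + 1)) ω ∂μ := rfl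
        _ = ∫ ω, (μ[F' * X (n + 1) | ℱ n]) ω ∂μ := (integral_condExp (hℱ n)).symm
        _ = ∫ ω, (F' * μ[X (n + 1) | ℱ n]) ω ∂μ := integral_congr_ae hpull
        _ = ∫ ω, F' ω * P (n + 1) ω ∂μ := by
            refine integral_congr_ae ?_
            filter_upwards [hPn1] with ω hω
            rw [Pi.mul_apply, hω]
    -- pointwise identity for g (n+1)
    have hgid : ∀ ω, g (n + 1) ω = F ω - a * (F' ω * X (n + 1) ω) := by
      intro ω
      rw [hg_succ n ω, hexpW (n + 1) ω]
      have hFW : F ω * W (n + 1) ω = F' ω * X (n + 1) ω := by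
        rw [hF'_def, hW_def]
        by_cases h : n + 1 ≤ τ ω
        · simp only [h, if_true]
        · simp [h]
      calc (g n ω * Real.exp (a * V (n + 1) ω)) * (1 - a * W (n + 1) ω)
          = F ω * (1 - a * W (n + 1) ω) := by rw [hF_def]
        _ = F ω - a * (F ω * W (n + 1) ω) := by ring
        _ = F ω - a * (F' ω * X (n + 1) ω) := by rw [hFW]
    -- pointwise bound
    have hptbd : ∀ ω, F ω - a * (F' ω * P (n + 1) ω) ≤ g n ω := by
      intro ω
      rw [hF'_def, hF_def]
      by_cases h : n + 1 ≤ τ ω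
      · simp only [h, if_true]
        have hVP : V (n + 1) ω = P (n + 1) ω := by rw [hV_def]; simp [h]
        rw [hVP]
        set p := P (n + 1) ω with hp_def
        have hp0 : 0 ≤ p := hP0 (n + 1) ω
        have h1 : 1 - a * p ≤ Real.exp (-(a * p)) := Real.one_sub_le_exp_neg _
        have h2 : Real.exp (a * p) * Real.exp (-(a * p)) = 1 := by
          rw [← Real.exp_add]; simp
        have h3 : Real.exp (a * p) * (1 - a * p) ≤ 1 := by
          calc Real.exp (a * p) * (1 - a * p)
              ≤ Real.exp (a * p) * Real.exp (-(a * p)) :=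
                mul_le_mul_of_nonneg_left h1 (Real.exp_pos _).le
            _ = 1 := h2
        have hgnn : 0 ≤ g n ω := (hg_pos n ω).le
        calc g n ω * Real.exp (a * p) - a * (g n ω * Real.exp (a * p) * p)
            = g n ω * (Real.exp (a * p) * (1 - a * p)) := by ring
          _ ≤ g n ω * 1 := mul_le_mul_of_nonneg_left h3 hgnn
          _ = g n ω := mul_one _
      · simp only [h, if_false]
        have hV0' : V (n + 1) ω = 0 := by rw [hV_def]; simp [h]
        rw [hV0']
        simp
    -- put it together
    calc ∫ ω, g (n + 1) ω ∂μ
        = ∫ ω, (F ω - a * (F' ω * X (n + 1) ω)) ∂μ := by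
          refine integral_congr_ae (ae_of_all _ fun ω => hgid ω)
      _ = ∫ ω, F ω ∂μ - a * ∫ ω, F' ω * X (n + 1) ω ∂μ := by
          have hint2 : Integrable (fun ω => a * (F' ω * X (n + 1) ω)) μ := by
            have := hF'Xint.const_mul a
            simpa using this
          rw [integral_sub hFint hint2, integral_const_mul]
      _ = ∫ ω, F ω ∂μ - a * ∫ ω, F' ω * P (n + 1) ω ∂μ := by rw [hkey]
      _ = ∫ ω, (F ω - a * (F' ω * P (n + 1) ω)) ∂μ := by
          have hint2 : Integrable (fun ω => a * (F' ω * P (n + 1) ω)) μ := by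
            have := hF'Pint.const_mul a
            simpa using this
          rw [integral_sub hFint hint2, integral_const_mul]
      _ ≤ ∫ ω, g n ω ∂μ := by
          have hint2 : Integrable (fun ω => a * (F' ω * P (n + 1) ω)) μ := by
            have := hF'Pint.const_mul a
            simpa using this
          exact integral_mono (hFint.sub hint2) (hgint n) (fun ω => hptbd ω)
  -- ∫ g n ≤ 1 for all n
  have hg0 : ∫ ω, g 0 ω ∂μ = 1 := by
    have : g 0 = fun _ => (1:ℝ) := by
      funext ω
      rw [hg_def]
      simp
    rw [this]
    simp
  have hind : ∀ n, ∫ ω, g n ω ∂μ ≤ 1 := by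
    intro n
    induction n with
    | zero => rw [hg0]
    | succ k ih => exact (hstep k).trans ih
  -- identify sums over Icc 1 m of W and V with stopped sums
  have hfilter : ∀ ω, Finset.Icc 1 (τ ω) = (Finset.Icc 1 m).filter (fun j => j ≤ τ ω) := by
    intro ω
    ext j
    simp only [Finset.mem_Icc, Finset.mem_filter]
    have := hτm ω
    omega
  have hsumW : ∀ ω, ∑ j ∈ Finset.Icc 1 m, W j ω = ∑ j ∈ Finset.Icc 1 (τ ω), X j ω := by
    intro ω
    rw [hfilter ω, Finset.sum_filter, hW_def]
  have hsumV : ∀ ω, ∑ j ∈ Finset.Icc 1 m, V j ω = ∑ j ∈ Finset.Icc 1 (τ ω), P j ω := by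
    intro ω
    rw [hfilter ω, Finset.sum_filter, hV_def]
  -- the event
  set E : Set Ω := {ω | ∑ i ∈ Finset.Icc 1 (τ ω), X i ω < (1 - δ) * r} with hE_def
  have hEmeas : MeasurableSet E := by
    have heq : E = {ω | ∑ j ∈ Finset.Icc 1 m, W j ω < (1 - δ) * r} := by
      ext ω
      rw [hE_def]
      simp only [Set.mem_setOf_eq]
      rw [hsumW ω]
    rw [heq]
    have hmeas : Measurable fun ω => ∑ j ∈ Finset.Icc 1 m, W j ω := by
      apply Finset.measurable_sum
      intro j hj
      rw [Finset.mem_Icc] at hj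
      exact (hWmeas m j hj.1 hj.2).mono (hℱ m) le_rfl
    exact measurableSet_lt hmeas measurable_const
  -- Markov
  set c : ℝ := Real.exp ((a - δ * (1 - δ)) * r) with hc_def
  have hc_pos : 0 < c := Real.exp_pos _
  have hindic : ∀ ω, Set.indicator E (fun _ => c) ω ≤ g m ω := by
    intro ω
    by_cases hω : ω ∈ E
    · rw [Set.indicator_of_mem hω]
      have hS : ∑ j ∈ Finset.Icc 1 (τ ω), X j ω < (1 - δ) * r := hω
      have hQ : r < ∑ j ∈ Finset.Icc 1 (τ ω), P j ω := (hτfirst ω).1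
      rw [hg_def, hc_def]
      simp only
      rw [Real.exp_le_exp]
      have hexpand : ∑ j ∈ Finset.Icc 1 m, (a * V j ω - δ * W j ω)
          = a * ∑ j ∈ Finset.Icc 1 (τ ω), P j ω
            - δ * ∑ j ∈ Finset.Icc 1 (τ ω), X j ω := by
        rw [Finset.sum_sub_distrib, ← Finset.mul_sum, ← Finset.mul_sum, hsumW ω, hsumV ω]
      rw [hexpand]
      nlinarith
    · rw [Set.indicator_of_notMem hω]
      exact (hg_pos m ω).le
  have hmarkov : c * (μ E).toReal ≤ 1 := by
    have h1 : ∫ ω, Set.indicator E (fun _ => c) ω ∂μ ≤ ∫ ω, g m ω ∂μ := by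
      refine integral_mono ((integrable_const c).indicator hEmeas) (hgint m)
        (fun ω => hindic ω)
    rw [integral_indicator_const c hEmeas] at h1
    have h2 : μ.real E • c = c * (μ E).toReal := by
      rw [smul_eq_mul, measureReal_def]; ring
    rw [h2] at h1
    exact h1.trans (hind m)
  -- conclude
  have hEfin : μ E ≠ ⊤ := measure_ne_top μ E
  have hEle : (μ E).toReal ≤ Real.exp ((δ * (1 - δ) - a) * r) := by
    have hcinv : Real.exp ((δ * (1 - δ) - a) * r) = c⁻¹ := by
      rw [hc_def, ← Real.exp_neg]
      congr 1
      ring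
    have ht : (μ E).toReal ≤ c⁻¹ := by
      rw [← one_div, le_div_iff₀ hc_pos]
      linarith [hmarkov]
    rw [hcinv]
    exact ht
  have hexp_le : Real.exp ((δ * (1 - δ) - a) * r) ≤ Real.exp (-(δ ^ 2) * r / 2) := by
    rw [Real.exp_le_exp]
    have key : Real.exp (-δ) ≤ 1 - δ + δ ^ 2 / 2 := aux_exp_neg_le_quadratic hδ0.le
    have : δ * (1 - δ) - a ≤ -(δ ^ 2) / 2 := by
      rw [ha_def]
      nlinarith
    nlinarith
  calc μ E = ENNReal.ofReal (μ E).toReal := (ENNReal.ofReal_toReal hEfin).symm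
    _ ≤ ENNReal.ofReal (Real.exp (-(δ ^ 2) * r / 2)) :=
        ENNReal.ofReal_le_ofReal (hEle.trans hexp_le)
end
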